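/- Let p > 3 be a prime, let m be an integer with (p+1)/2 ≤ m ≤ p-1, and let t be a p-adic integer. Then binom(m + pt - 1, (p-1)/2) · binom(-1 - pt - m, (p-1)/2) ≡ p(t+1)/m (mod p²) in the ring of p-adic integers. -/

import Mathlib

open Finset


/-- `n! * (n+1)(n+2)⋯(n+k) = (n+k)!` -/
lemma aux_fac_mul_prod (n : ℕ) : ∀ k, n.factorial * ∏ j ∈ range k, (n + 1 + j) = (n + k).factorial
  | 0 => by simp
  | k + 1 => by
    rw [prod_range_succ, ← mul_assoc, aux_fac_mul_prod n k]
    rw [← Nat.add_assoc, Nat.factorial_succ]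
    ring

/-- `(q-n)! * q(q-1)⋯(q-n+1) = q!` -/
lemma aux_desc (q n : ℕ) (h : n ≤ q) :
    (q - n).factorial * ∏ j ∈ range n, (q - j) = q.factorial := by
  rw [← Nat.descFactorial_eq_prod_range, Nat.factorial_mul_descFactorial h]

lemma aux_int_U (q n : ℕ) (hn1 : 1 ≤ n) (hn2 : n ≤ q) :
    ∏ j ∈ (range q).erase (n-1), ((n:ℤ) - (j+1)) =
      (-1)^(q-n) * (n-1).factorial * (q-n).factorial := by
  have hsplit : (range q).erase (n-1) = range (n-1) ∪ Ico n q := by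
    ext j; simp only [mem_erase, mem_range, mem_union, mem_Ico]; omega
  have hdisj : Disjoint (range (n-1)) (Ico n q) := by
    rw [Finset.disjoint_left]; intro a ha hb
    simp only [mem_range] at ha; simp only [mem_Ico] at hb; omega
  rw [hsplit, prod_union hdisj]
  have h1 : ∏ j ∈ range (n-1), ((n:ℤ) - (j+1)) = (n-1).factorial := by
    have : ∀ j ∈ range (n-1), ((n:ℤ) - (j+1)) = (((n-1) - j : ℕ) : ℤ) := by
      intro j hj; simp only [mem_range] at hj
      have : j ≤ n - 1 := le_of_lt hj
      push_cast [Nat.cast_sub this]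
      have : (1:ℤ) ≤ n := by exact_mod_cast hn1
      push_cast [Nat.cast_sub hn1]
      ring
    rw [prod_congr rfl this, ← Nat.cast_prod, ← Nat.descFactorial_eq_prod_range,
      Nat.descFactorial_self]
  have h2 : ∏ j ∈ Ico n q, ((n:ℤ) - (j+1)) = (-1)^(q-n) * (q-n).factorial := by
    rw [Finset.prod_Ico_eq_prod_range]
    have : ∀ i ∈ range (q-n), ((n:ℤ) - ((n + i : ℕ) + 1)) = (-1) * ((i:ℤ)+1) := by
      intro i _; push_cast; ring
    rw [prod_congr rfl this, prod_mul_distrib, prod_const, card_range]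
    congr 1
    rw [← Finset.prod_range_add_one_eq_factorial (q-n)]
    push_cast
    rfl
  rw [h1, h2]; ring

lemma aux_I3 (p q n : ℕ) [Fact p.Prime] (hpq : p = 2*q+1) (hn : n ≤ q) :
    (-1:ZMod p)^n * ((q-n).factorial * ((q+n).factorial : ZMod p)) = ((q.factorial : ZMod p))^2 := by
  have hp0 : ((2*q+1 : ℕ) : ZMod p) = 0 := by rw [← hpq]; exact ZMod.natCast_self p
  push_cast at hp0
  have h1 : ((q+n).factorial : ZMod p) =
      (q.factorial : ZMod p) * ∏ j ∈ range n, ((q:ZMod p) + 1 + j) := by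
    rw [← aux_fac_mul_prod q n]; push_cast; ring
  have h2 : ∏ j ∈ range n, ((q:ZMod p) + 1 + j) =
      ∏ j ∈ range n, ((-1) * (((q - j : ℕ)) : ZMod p)) := by
    refine prod_congr rfl fun j hj => ?_
    have hj' : j ≤ q := le_trans (le_of_lt (mem_range.mp hj)) hn
    rw [Nat.cast_sub hj']
    linear_combination hp0
  rw [prod_mul_distrib, prod_const, card_range] at h2
  have h3 : ((q-n).factorial : ZMod p) * ∏ j ∈ range n, (((q - j : ℕ)) : ZMod p)
      = (q.factorial : ZMod p) := by
    have := aux_desc q n hn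
    push_cast [← this]
    ring
  have hs : ((-1:ZMod p)^n) * (-1:ZMod p)^n = 1 := by
    rw [← pow_add, ← two_mul, pow_mul]; norm_num
  rw [h1, h2]
  set Pr := ∏ j ∈ range n, (((q - j : ℕ)) : ZMod p)
  linear_combination ((q-n).factorial : ZMod p) * (q.factorial:ZMod p) * Pr * hs
    + (q.factorial:ZMod p) * h3

lemma aux_zmod_key (p q n : ℕ) [Fact p.Prime] (hpq : p = 2*q+1) (hn1 : 1 ≤ n) (hn2 : n ≤ q) :
    (-1:ZMod p)^q * (2 * (n:ZMod p)^2) *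
      ∏ j ∈ (range q).erase (n-1), ((n:ZMod p)^2 - ((j:ZMod p)+1)^2)
    = ((q.factorial : ZMod p))^2 := by
  have hplt : ∀ a : ℕ, 0 < a → a < p → ((a : ZMod p) ≠ 0) := by
    intro a ha hap h0
    rw [ZMod.natCast_eq_zero_iff] at h0
    exact absurd (Nat.le_of_dvd ha h0) (not_le.mpr hap)
  -- split each factor
  have hsplit : ∏ j ∈ (range q).erase (n-1), ((n:ZMod p)^2 - ((j:ZMod p)+1)^2)
      = (∏ j ∈ (range q).erase (n-1), ((n:ZMod p) - (j+1))) *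
        (∏ j ∈ (range q).erase (n-1), ((n:ZMod p) + (j+1))) := by
    rw [← prod_mul_distrib]
    exact prod_congr rfl fun j _ => by ring
  -- U via integers
  have hU : (∏ j ∈ (range q).erase (n-1), ((n:ZMod p) - (j+1)))
      = (((-1:ℤ)^(q-n) * (n-1).factorial * (q-n).factorial : ℤ) : ZMod p) := by
    rw [← aux_int_U q n hn1 hn2]
    push_cast
    rfl
  -- V identity
  have hmem : n - 1 ∈ range q := by simp only [mem_range]; omega
  have hVfull : ∏ j ∈ range q, ((n:ZMod p) + (j+1))
      = ((n:ZMod p) + ((n-1:ℕ) + 1)) * ∏ j ∈ (range q).erase (n-1), ((n:ZMod p) + (j+1)) :=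
    (mul_prod_erase _ _ hmem).symm
  have hn1' : ((n-1:ℕ):ZMod p) + 1 = (n:ZMod p) := by
    have : ((n-1)+1 : ℕ) = n := by omega
    rw [← this]; push_cast; ring
  have hfull : (n.factorial : ZMod p) * ∏ j ∈ range q, ((n:ZMod p) + (j+1))
      = ((n+q).factorial : ZMod p) := by
    rw [← aux_fac_mul_prod n q]
    push_cast
    ring_nf
  -- combine: n! * 2n * V = (n+q)!
  have hV : (n.factorial : ZMod p) * (2*(n:ZMod p)) *
      ∏ j ∈ (range q).erase (n-1), ((n:ZMod p) + (j+1)) = ((n+q).factorial : ZMod p) := by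
    rw [← hfull, hVfull, hn1']
    ring
  -- nonvanishing
  have h2n : (2*(n:ZMod p)) ≠ 0 := by
    have : ((2*n : ℕ) : ZMod p) ≠ 0 := hplt (2*n) (by omega) (by omega)
    push_cast at this; exact this
  have hnfac : ((n.factorial : ℕ) : ZMod p) ≠ 0 := by
    intro h0
    rw [ZMod.natCast_eq_zero_iff] at h0
    have := (Nat.Prime.dvd_factorial Fact.out).mp h0
    omega
  -- final
  apply mul_right_cancel₀ (b := (2*(n:ZMod p)) * (n.factorial : ZMod p)) (by exact mul_ne_zero h2n hnfac)
  rw [hsplit, hU]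
  have hI3 := aux_I3 p q n hpq hn2
  set U := ∏ j ∈ (range q).erase (n-1), ((n:ZMod p) + (j+1)) with hUdef
  -- goal: (-1)^q * (2n²) * (cast * U) * (2n * n!) = (q!)² * (2n * n!)
  have key : (-1:ZMod p)^q * (2 * (n:ZMod p)^2) * ((((-1:ℤ)^(q-n) * (n-1).factorial * (q-n).factorial : ℤ) : ZMod p)) * ((n+q).factorial : ZMod p)
      = ((q.factorial : ZMod p))^2 * ((2*(n:ZMod p)) * (n.factorial : ZMod p)) := by
    push_cast
    have hqn : (-1:ZMod p)^q * (-1)^(q-n) = (-1)^n := by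
      have hA : (-1:ZMod p)^q * (-1)^(q-n) * (-1)^n = 1 := by
        rw [← pow_add, ← pow_add, show q+(q-n)+n = 2*q by omega, pow_mul]; norm_num
      have hsq : ((-1:ZMod p)^n) * (-1:ZMod p)^n = 1 := by
        rw [← pow_add, ← two_mul, pow_mul]; norm_num
      linear_combination (-1:ZMod p)^n * hA - ((-1:ZMod p)^q * (-1)^(q-n)) * hsq
    have hfacn : ((n:ZMod p))^2 * ((n-1).factorial : ZMod p) = (n:ZMod p) * (n.factorial : ZMod p) := by
      have : n * (n-1).factorial = n.factorial := by
        obtain ⟨k, rfl⟩ : ∃ k, n = k+1 := ⟨n-1, by omega⟩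
        simp [Nat.factorial_succ]
      calc ((n:ZMod p))^2 * ((n-1).factorial : ZMod p)
          = (n:ZMod p) * ((n * (n-1).factorial : ℕ) : ZMod p) := by push_cast; ring
        _ = (n:ZMod p) * (n.factorial : ZMod p) := by rw [this]
    have hcomm : ((n+q).factorial : ZMod p) = ((q+n).factorial : ZMod p) := by rw [Nat.add_comm]
    rw [hcomm]
    linear_combination (2 * (n:ZMod p)^2 * ((n-1).factorial:ZMod p) * ((q-n).factorial:ZMod p) * ((q+n).factorial:ZMod p)) * hqn
      + (2 * ((q-n).factorial:ZMod p) * ((q+n).factorial:ZMod p) * ((-1:ZMod p)^n)) * hfacn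
      + (2 * (n:ZMod p) * (n.factorial : ZMod p)) * hI3
  calc (-1:ZMod p)^q * (2 * (n:ZMod p)^2) * ((((-1:ℤ)^(q-n) * (n-1).factorial * (q-n).factorial : ℤ) : ZMod p) * U) * ((2*(n:ZMod p)) * (n.factorial : ZMod p))
      = (-1:ZMod p)^q * (2 * (n:ZMod p)^2) * ((((-1:ℤ)^(q-n) * (n-1).factorial * (q-n).factorial : ℤ) : ZMod p)) * ((n.factorial : ZMod p) * (2*(n:ZMod p)) * U) := by ring
    _ = ((q.factorial : ZMod p))^2 * ((2*(n:ZMod p)) * (n.factorial : ZMod p)) := by rw [hV, key]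


/-- The generalized binomial coefficient `C(x, n) = x(x-1)⋯(x-n+1)/n!` for a
`p`-adic number `x` (a `p`-adic integer when `x` is). -/
noncomputable def padicChoose {p : ℕ} [Fact p.Prime] (x : ℚ_[p]) (n : ℕ) : ℚ_[p] :=
  (∏ j ∈ Finset.range n, (x - j)) / (n.factorial : ℚ_[p])


/-- For a prime `p > 3`, an integer `(p+1)/2 ≤ m ≤ p-1`, and a `p`-adic integer `t`:
`C(m + pt - 1, (p-1)/2) · C(-1 - pt - m, (p-1)/2) ≡ p(t+1)/m (mod p²)` in `ℤ_p`,
i.e. the difference has `p`-adic norm at most `p^{-2}`. -/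
theorem padicChoose_mul_padicChoose_congr_large_m (p : ℕ) [Fact p.Prime] (hp : 3 < p)
    (m : ℕ) (hm1 : (p + 1) / 2 ≤ m) (hm2 : m ≤ p - 1) (t : ℤ_[p]) :
    ‖padicChoose ((m : ℚ_[p]) + (p : ℚ_[p]) * (t : ℚ_[p]) - 1) ((p - 1) / 2) *
        padicChoose (-1 - (p : ℚ_[p]) * (t : ℚ_[p]) - (m : ℚ_[p])) ((p - 1) / 2) -
      (p : ℚ_[p]) * ((t : ℚ_[p]) + 1) / (m : ℚ_[p])‖ ≤ (p : ℝ) ^ (-2 : ℤ) := by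
  have hprime : p.Prime := Fact.out
  have hodd : p % 2 = 1 := Nat.odd_iff.mp (hprime.odd_of_ne_two (by omega))
  set q : ℕ := (p - 1) / 2 with hqdef
  have hpq : p = 2*q + 1 := by omega
  set n : ℕ := p - m with hndef
  have hn1 : 1 ≤ n := by omega
  have hn2 : n ≤ q := by omega
  have hmpos : 0 < m := by omega
  have hmlt : m < p := by omega
  have hq1 : 1 ≤ q := by omega
  -- ℤ_p objects
  set X : ℤ_[p] := (m:ℤ_[p]) + p * t with hXdef
  set P₁ : ℤ_[p] := ∏ j ∈ range q, (X - ((j:ℤ_[p])+1)) with hP1def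
  set P₂ : ℤ_[p] := ∏ j ∈ range q, (X + ((j:ℤ_[p])+1)) with hP2def
  set R : ℤ_[p] := ∏ j ∈ (range q).erase (n-1), (X^2 - ((j:ℤ_[p])+1)^2) with hRdef
  have hmem : n - 1 ∈ range q := by simp only [mem_range]; omega
  have hcast_n : ((n-1:ℕ):ℤ_[p]) + 1 = (n:ℤ_[p]) := by
    rw [show (n:ℕ) = (n-1)+1 by omega]; push_cast; ring
  have hPP : P₁ * P₂ = (X - n) * ((X + n) * R) := by
    have h1 : P₁ * P₂ = ∏ j ∈ range q, (X^2 - ((j:ℤ_[p])+1)^2) := by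
      rw [hP1def, hP2def, ← prod_mul_distrib]
      exact prod_congr rfl fun j _ => by ring
    rw [h1, ← mul_prod_erase _ _ hmem, ← hRdef, hcast_n]
    ring
  have hXn : X + n = (p:ℤ_[p]) * (1 + t) := by
    have : ((m:ℕ):ℤ_[p]) + ((n:ℕ):ℤ_[p]) = (p:ℤ_[p]) := by
      rw [← Nat.cast_add, show m + n = p by omega]
    rw [hXdef]; linear_combination this
  -- E and its reduction mod p
  set E : ℤ_[p] := (m:ℤ_[p]) * ((-1)^q * ((X - n) * R)) with hEdef
  have hker : PadicInt.toZMod (E - (q.factorial:ℤ_[p])^2) = 0 := by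
    have hXmod : PadicInt.toZMod X = (m : ZMod p) := by
      rw [hXdef]
      simp [map_add, map_mul, map_natCast, ZMod.natCast_self]
    have hmn : (m : ZMod p) = -(n : ZMod p) := by
      have : ((m:ℕ) : ZMod p) + ((n:ℕ) : ZMod p) = 0 := by
        rw [← Nat.cast_add, show m + n = p by omega, ZMod.natCast_self]
      linear_combination this
    have hRmod : PadicInt.toZMod R =
        ∏ j ∈ (range q).erase (n-1), ((n:ZMod p)^2 - ((j:ZMod p)+1)^2) := by
      rw [hRdef, map_prod]
      refine prod_congr rfl fun j _ => ?_
      simp only [map_sub, map_pow, hXmod, map_add, map_natCast, map_one, hmn]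
      ring
    rw [map_sub, hEdef, map_mul, map_mul, map_pow, map_mul, map_sub, map_natCast,
      map_natCast, map_neg, map_one, map_pow, map_natCast, hXmod, hRmod, hmn]
    have := aux_zmod_key p q n hpq hn1 hn2
    linear_combination this
  -- obtain F
  obtain ⟨F, hF⟩ : (p:ℤ_[p]) ∣ (E - (q.factorial:ℤ_[p])^2) := by
    rw [← Ideal.mem_span_singleton, ← PadicInt.maximalIdeal_eq_span_p, ← PadicInt.ker_toZMod]
    exact hker
  have keyZ : (m:ℤ_[p]) * ((-1)^q * (P₁*P₂)) =
      (p:ℤ_[p])*(1+t)*((q.factorial:ℤ_[p])^2 + (p:ℤ_[p])*F) := by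
    rw [hPP, hXn]
    linear_combination ((p:ℤ_[p])*(1+t)) * hF
  -- to ℚ_p
  have keyQ : (m:ℚ_[p]) * ((-1)^q * ((P₁:ℚ_[p])*(P₂:ℚ_[p]))) =
      (p:ℚ_[p])*(1+(t:ℚ_[p]))*(((q.factorial:ℕ):ℚ_[p])^2 + (p:ℚ_[p])*((F:ℤ_[p]):ℚ_[p])) := by
    have := congrArg (fun z : ℤ_[p] => (z : ℚ_[p])) keyZ
    simpa only [PadicInt.coe_mul, PadicInt.coe_add, PadicInt.coe_pow, PadicInt.coe_natCast,
      PadicInt.coe_neg, PadicInt.coe_one] using this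
  have coe_prod : ∀ (s : Finset ℕ) (f : ℕ → ℤ_[p]),
      ((∏ j ∈ s, f j : ℤ_[p]) : ℚ_[p]) = ∏ j ∈ s, ((f j : ℚ_[p])) := by
    intro s f
    induction s using Finset.cons_induction with
    | empty => simp
    | cons a s ha ih => rw [Finset.prod_cons, Finset.prod_cons, PadicInt.coe_mul, ih]
  have hP1Q : ((P₁ : ℤ_[p]) : ℚ_[p]) = ∏ j ∈ range q,
      ((m : ℚ_[p]) + (p : ℚ_[p]) * (t : ℚ_[p]) - 1 - (j:ℚ_[p])) := by
    rw [hP1def, coe_prod]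
    refine prod_congr rfl fun j _ => ?_
    rw [hXdef]
    push_cast
    ring
  have hP2Q : ((-1:ℚ_[p]))^q * ((P₂ : ℤ_[p]) : ℚ_[p]) = ∏ j ∈ range q,
      (-1 - (p : ℚ_[p]) * (t : ℚ_[p]) - (m : ℚ_[p]) - (j:ℚ_[p])) := by
    rw [hP2def, coe_prod]
    have h1 : ∀ j ∈ range q, (-1 - (p : ℚ_[p]) * (t : ℚ_[p]) - (m : ℚ_[p]) - (j:ℚ_[p]))
        = (-1) * (((X + ((j:ℤ_[p])+1) : ℤ_[p]) : ℚ_[p])) := by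
      intro j _
      rw [hXdef]
      push_cast
      ring
    rw [prod_congr rfl h1, prod_mul_distrib, prod_const, card_range]
  have hm0 : (m:ℚ_[p]) ≠ 0 := Nat.cast_ne_zero.mpr (by omega)
  have hq0 : ((q.factorial:ℕ):ℚ_[p]) ≠ 0 := Nat.cast_ne_zero.mpr q.factorial_ne_zero
  have hcoeF : (((1+t)*F : ℤ_[p]) : ℚ_[p]) = (1+(t:ℚ_[p]))*((F:ℤ_[p]):ℚ_[p]) := by
    push_cast; ring
  have habm :
      padicChoose ((m : ℚ_[p]) + (p : ℚ_[p]) * (t : ℚ_[p]) - 1) q *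
        padicChoose (-1 - (p : ℚ_[p]) * (t : ℚ_[p]) - (m : ℚ_[p])) q -
        (p : ℚ_[p]) * ((t : ℚ_[p]) + 1) / (m : ℚ_[p])
      = (p:ℚ_[p])^2 * (((1+t)*F : ℤ_[p]) : ℚ_[p]) /
          ((m:ℚ_[p]) * ((q.factorial:ℕ):ℚ_[p])^2) := by
    rw [padicChoose, padicChoose, ← hP1Q, ← hP2Q, hcoeF]
    field_simp
    linear_combination keyQ
  have hnm : ‖(m:ℚ_[p])‖ = 1 := by
    have h1 : ‖((m:ℤ):ℚ_[p])‖ ≤ 1 := Padic.norm_int_le_one _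
    have h2 : ¬ (‖((m:ℤ):ℚ_[p])‖ < 1) := by
      rw [Padic.norm_intCast_lt_one_iff]
      intro hdvd
      have := Int.le_of_dvd (by exact_mod_cast hmpos) hdvd
      omega
    have h3 : ‖((m:ℤ):ℚ_[p])‖ = 1 := le_antisymm h1 (not_lt.mp h2)
    simpa using h3
  have hnq : ‖((q.factorial:ℕ):ℚ_[p])‖ = 1 := by
    have h1 : ‖((q.factorial:ℤ):ℚ_[p])‖ ≤ 1 := Padic.norm_int_le_one _
    have h2 : ¬ (‖((q.factorial:ℤ):ℚ_[p])‖ < 1) := by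
      rw [Padic.norm_intCast_lt_one_iff]
      intro hdvd
      have hdvd' : p ∣ q.factorial := by exact_mod_cast hdvd
      have := (Nat.Prime.dvd_factorial hprime).mp hdvd'
      omega
    have h3 : ‖((q.factorial:ℤ):ℚ_[p])‖ = 1 := le_antisymm h1 (not_lt.mp h2)
    simpa using h3
  have hz : ‖(((1+t)*F : ℤ_[p]) : ℚ_[p])‖ ≤ 1 := by
    rw [PadicInt.padic_norm_e_of_padicInt]; exact PadicInt.norm_le_one _
  have hden : ‖(m:ℚ_[p]) * ((q.factorial:ℕ):ℚ_[p])^2‖ = 1 := by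
    rw [norm_mul, norm_pow, hnm, hnq]; norm_num
  rw [habm, norm_div, hden, div_one, norm_mul, norm_pow, Padic.norm_p]
  have hle : ((p:ℝ)⁻¹)^2 * ‖(((1+t)*F : ℤ_[p]) : ℚ_[p])‖ ≤ ((p:ℝ)⁻¹)^2 := by
    calc ((p:ℝ)⁻¹)^2 * ‖(((1+t)*F : ℤ_[p]) : ℚ_[p])‖ ≤ ((p:ℝ)⁻¹)^2 * 1 := by
          gcongr
      _ = ((p:ℝ)⁻¹)^2 := mul_one _
  refine hle.trans (le_of_eq ?_)
  rw [zpow_neg, inv_pow]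
  norm_cast
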